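/- Let N be a positive integer, let 0 < χ₁ < ... < χ_N, and set S_{ij} = (χ_i − χ_j)/(χ_i + χ_j) and S_r = ∏_{i,j ∈ r, i < j} S_{ij}² for any subset r ⊆ {1,...,N}. Let Ψ be the diagonal matrix with positive diagonal entries Ψ_i and ω the matrix with entries ω_{ij} = 2√(χ_i χ_j)/(χ_i + χ_j). Then det(Ψ² + ω) = ∑_{p ⊆ {1,...,N}} S_{{1,...,N} \ p} · ∏_{i ∈ p} Ψ_i². -/

import Mathlib

open Finset Matrix

lemma cauchy_det : ∀ (n : ℕ) (x : Fin n → ℝ), (∀ i, 0 < x i) →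
    Matrix.det (Matrix.of fun i j : Fin n => (x i + x j)⁻¹)
      = (∏ i, (2 * x i)⁻¹) * ∏ i, ∏ j ∈ Ioi i, ((x i - x j) / (x i + x j)) ^ 2 := by
  intro n
  induction n with
  | zero => intro x hx; simp
  | succ n ih =>
    intro x hx
    have hne : ∀ i j : Fin (n+1), x i + x j ≠ 0 := fun i j => (add_pos (hx i) (hx j)).ne'
    set v1 : Fin (n+1) → ℝ := fun j => (x 0 + x j)⁻¹ with hv1
    set w1 : Fin (n+1) → ℝ := fun i => if i = 0 then 1 else x 0 - x i with hw1
    set M3 : Matrix (Fin (n+1)) (Fin (n+1)) ℝ := Matrix.of fun i j =>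
        (if i = 0 then (1:ℝ) else (x i + x j)⁻¹) with hM3
    set M2 : Matrix (Fin (n+1)) (Fin (n+1)) ℝ := Matrix.of fun i j =>
        (if i = 0 then (1:ℝ) else (x 0 - x i) * (x i + x j)⁻¹) with hM2
    set M5 : Matrix (Fin (n+1)) (Fin (n+1)) ℝ := Matrix.of fun i j =>
        (if j = 0 then (if i = 0 then (1:ℝ) else 0) else
          (if i = 0 then (x j + x 0)⁻¹ else (x 0 - x i) * ((x j + x i)⁻¹ * (x j + x 0)⁻¹))) with hM5
    -- Step 1: subtract row 0 from each other row
    have h1 : Matrix.det (Matrix.of fun i j : Fin (n+1) => v1 j * M2 i j)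
        = Matrix.det (Matrix.of fun i j : Fin (n+1) => (x i + x j)⁻¹) := by
      apply Matrix.det_eq_of_forall_row_eq_smul_add_const
        (fun i => if i = 0 then 0 else (-1:ℝ)) 0 (if_pos rfl)
      intro i j
      simp only [Matrix.of_apply, hM2, hv1]
      split_ifs with h
      · subst h; ring
      · have a := hne i j; have b := hne 0 j
        field_simp
        ring
    -- Step 2: factor out scalars
    have h2 : Matrix.det (Matrix.of fun i j : Fin (n+1) => v1 j * M2 i j)
        = (∏ j, v1 j) * ((∏ i, w1 i) * Matrix.det M3) := by
      rw [Matrix.det_mul_row]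
      congr 1
      have : M2 = Matrix.of fun i j => w1 i * M3 i j := by
        ext i j
        simp only [Matrix.of_apply, hM2, hM3, hw1]
        split_ifs with h <;> simp
      rw [this, Matrix.det_mul_column]
    -- Step 3: subtract row 0 of M3ᵀ from each other row
    have h3 : Matrix.det M5 = Matrix.det M3 := by
      rw [← Matrix.det_transpose M3]
      apply Matrix.det_eq_of_forall_row_eq_smul_add_const
        (fun i => if i = 0 then 0 else (-1:ℝ)) 0 (if_pos rfl)
      intro i j
      simp only [Matrix.of_apply, Matrix.transpose_apply, hM5, hM3]
      rcases eq_or_ne i 0 with hi | hi <;> rcases eq_or_ne j 0 with hj | hj <;>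
        simp only [hi, hj, if_pos rfl, if_neg, hj, hi] <;> simp [hi, hj]
      have a := hne j i; have b := hne j 0
      field_simp
      ring
    -- Step 4: expand along column 0
    have h4 : Matrix.det M5 = Matrix.det (M5.submatrix Fin.succ Fin.succ) := by
      rw [Matrix.det_succ_column_zero, Fin.sum_univ_succ]
      have h0 : M5 0 0 = 1 := by simp [hM5]
      have hs : ∀ i : Fin n, M5 i.succ 0 = 0 := by
        intro i; simp [hM5, Fin.succ_ne_zero]
      simp [h0, hs, Fin.succAbove_zero]
    -- Step 5: identify the submatrix
    have h5 : Matrix.det (M5.submatrix Fin.succ Fin.succ)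
        = (∏ j : Fin n, (x (Fin.succ j) + x 0)⁻¹) *
            ((∏ i : Fin n, (x 0 - x (Fin.succ i))) *
              Matrix.det (Matrix.of fun i j : Fin n => (x (Fin.succ i) + x (Fin.succ j))⁻¹)) := by
      have : M5.submatrix Fin.succ Fin.succ = Matrix.of fun i j : Fin n =>
          (x (Fin.succ j) + x 0)⁻¹ *
            ((Matrix.of fun i j : Fin n =>
                (x 0 - x (Fin.succ i)) * (x (Fin.succ i) + x (Fin.succ j))⁻¹) i j) := by
        ext i j
        simp only [Matrix.submatrix_apply, Matrix.of_apply, hM5,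
          if_neg (Fin.succ_ne_zero j), if_neg (Fin.succ_ne_zero i)]
        rw [add_comm (x (Fin.succ j)) (x (Fin.succ i))]
        ring
      rw [this, Matrix.det_mul_row]
      congr 1
      exact Matrix.det_mul_column _ _
    have hih := ih (x ∘ Fin.succ) (fun i => hx _)
    simp only [Function.comp] at hih
    rw [← h1, h2, ← h3, h4, h5, hih]
    -- Step 6: combine the products
    rw [hv1, hw1]
    rw [Fin.prod_univ_succ (fun j => (x 0 + x j)⁻¹),
        Fin.prod_univ_succ (fun i => if i = 0 then (1:ℝ) else x 0 - x i),
        Fin.prod_univ_succ (fun i => (2 * x i)⁻¹),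
        Fin.prod_univ_succ (fun i => ∏ j ∈ Ioi i, ((x i - x j) / (x i + x j)) ^ 2)]
    simp only [if_pos rfl, Fin.succ_ne_zero, if_neg, ite_false, one_mul]
    rw [Fin.prod_Ioi_zero]
    simp only [Fin.prod_Ioi_succ]
    have key : (∏ j : Fin n, (x 0 + x (Fin.succ j))⁻¹) * (∏ i : Fin n, (x 0 - x (Fin.succ i))) *
        ((∏ j : Fin n, (x (Fin.succ j) + x 0)⁻¹) * (∏ i : Fin n, (x 0 - x (Fin.succ i))))
        = ∏ j : Fin n, ((x 0 - x (Fin.succ j)) / (x 0 + x (Fin.succ j))) ^ 2 := by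
      rw [← Finset.prod_mul_distrib, ← Finset.prod_mul_distrib, ← Finset.prod_mul_distrib]
      apply Finset.prod_congr rfl
      intro j _
      have a := hne 0 (Fin.succ j)
      rw [add_comm (x (Fin.succ j)) (x 0)]
      field_simp
    rw [← key]
    have h2x : x 0 + x 0 = 2 * x 0 := by ring
    rw [h2x]
    simp only [if_true]
    ring
lemma omega_det (n : ℕ) (x : Fin n → ℝ) (hx : ∀ i, 0 < x i) :
    Matrix.det (Matrix.of fun i j : Fin n => 2 * Real.sqrt (x i * x j) / (x i + x j))
      = ∏ i, ∏ j ∈ Ioi i, ((x i - x j) / (x i + x j)) ^ 2 := by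
  have hsq : ∀ i j : Fin n, Real.sqrt (2 * x i) * Real.sqrt (2 * x j)
      = 2 * Real.sqrt (x i * x j) := by
    intro i j
    have h1 := hx i; have h2 := hx j
    rw [← Real.sqrt_mul (by positivity)]
    rw [show (2 * x i) * (2 * x j) = 2^2 * (x i * x j) by ring,
      Real.sqrt_mul (by positivity), Real.sqrt_sq (by norm_num)]
  have key : (Matrix.of fun i j : Fin n => 2 * Real.sqrt (x i * x j) / (x i + x j))
      = Matrix.of fun i j : Fin n => Real.sqrt (2 * x j) *
          ((Matrix.of fun i j : Fin n => Real.sqrt (2 * x i) * (x i + x j)⁻¹) i j) := by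
    ext i j
    simp only [Matrix.of_apply]
    rw [← mul_assoc, mul_comm (Real.sqrt (2 * x j)), hsq, div_eq_mul_inv]
  rw [key, Matrix.det_mul_row, Matrix.det_mul_column (fun i => Real.sqrt (2 * x i)) (fun i j => (x i + x j)⁻¹)]
  have hc : (Matrix.det fun i j : Fin n => (x i + x j)⁻¹)
      = (∏ i, (2 * x i)⁻¹) * ∏ i, ∏ j ∈ Ioi i, ((x i - x j) / (x i + x j)) ^ 2 :=
    cauchy_det n x hx
  rw [hc]
  rw [← mul_assoc, ← mul_assoc, ← Finset.prod_mul_distrib, ← Finset.prod_mul_distrib]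
  have : ∀ i : Fin n, Real.sqrt (2 * x i) * Real.sqrt (2 * x i) * (2 * x i)⁻¹ = 1 := by
    intro i
    have h1 := hx i
    rw [Real.mul_self_sqrt (by positivity)]
    exact mul_inv_cancel₀ (by positivity)
  rw [Finset.prod_congr rfl fun i _ => this i, Finset.prod_const_one, one_mul]
lemma det_of_basis_rows {N : ℕ} (p : Finset (Fin N)) (M : Matrix (Fin N) (Fin N) ℝ)
    (h : ∀ i ∈ p, M i = Pi.single i 1) :
    M.det = Matrix.det (Matrix.of fun i j : ↥(pᶜ : Finset (Fin N)) => M i j) := by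
  classical
  let e : (↥p ⊕ ↥(pᶜ : Finset (Fin N))) ≃ Fin N :=
    (Equiv.sumCongr (Equiv.refl _) (Equiv.subtypeEquivRight (fun x => Finset.mem_compl))).trans
      (Equiv.sumCompl (· ∈ p))
  rw [← Matrix.det_submatrix_equiv_self e M]
  have he1 : ∀ i : ↥p, e (Sum.inl i) = (i : Fin N) := fun i => rfl
  have he2 : ∀ i : ↥(pᶜ : Finset (Fin N)), e (Sum.inr i) = (i : Fin N) := fun i => rfl
  have hblocks : M.submatrix e e =
      Matrix.fromBlocks 1 0
        (Matrix.of fun (i : ↥(pᶜ : Finset (Fin N))) (j : ↥p) => M i j)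
        (Matrix.of fun i j : ↥(pᶜ : Finset (Fin N)) => M i j) := by
    ext i j
    rcases i with i | i <;> rcases j with j | j <;>
      simp only [Matrix.submatrix_apply, he1, he2, Matrix.fromBlocks_apply₁₁,
        Matrix.fromBlocks_apply₁₂, Matrix.fromBlocks_apply₂₁, Matrix.fromBlocks_apply₂₂,
        Matrix.of_apply]
    · rw [h i i.2, Matrix.one_apply, Pi.single_apply]
      by_cases hij : i = j
      · subst hij; simp
      · have hne : (j : Fin N) ≠ i := fun h => hij (Subtype.ext h.symm)
        simp [hij, hne, hne.symm]
    · rw [h i i.2, Pi.single_apply, if_neg, Matrix.zero_apply]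
      have : (j : Fin N) ∈ pᶜ := j.2
      rw [Finset.mem_compl] at this
      exact fun hji => this (hji ▸ i.2)
  rw [hblocks, Matrix.det_fromBlocks_zero₁₂, Matrix.det_one, one_mul]

lemma det_diagonal_add {N : ℕ} (d : Fin N → ℝ) (A : Matrix (Fin N) (Fin N) ℝ) :
    (Matrix.diagonal d + A).det
      = ∑ p : Finset (Fin N), (∏ i ∈ p, d i) *
          Matrix.det (Matrix.of fun i j : ↥(pᶜ : Finset (Fin N)) => A i j) := by
  classical
  have expand : (Matrix.diagonal d + A).det
      = ∑ s : Finset (Fin N),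
          (Matrix.detRowAlternating (s.piecewise (Matrix.diagonal d) A) : ℝ) :=
    (Matrix.detRowAlternating.toMultilinearMap.map_add_univ (Matrix.diagonal d) A)
  rw [expand]
  refine Finset.sum_congr rfl fun s _ => ?_
  set B : Matrix (Fin N) (Fin N) ℝ := s.piecewise (fun i => Pi.single i 1) A with hB
  have hpw : s.piecewise (Matrix.diagonal d) A = s.piecewise (fun i => d i • B i) B := by
    ext i j
    by_cases hi : i ∈ s
    · simp only [Finset.piecewise, if_pos hi, hB]
      simp [Matrix.diagonal, Pi.single_apply, eq_comm]
    · simp only [Finset.piecewise, if_neg hi, hB]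
  rw [hpw]
  have hsmul : (Matrix.detRowAlternating (s.piecewise (fun i => d i • B i) B) : ℝ)
      = (∏ i ∈ s, d i) • (Matrix.detRowAlternating B : ℝ) :=
    Matrix.detRowAlternating.toMultilinearMap.map_piecewise_smul d B s
  rw [hsmul, smul_eq_mul]
  congr 1
  have hBdet : (Matrix.detRowAlternating B : ℝ) = B.det := rfl
  rw [hBdet, det_of_basis_rows s B (fun i hi => Finset.piecewise_eq_of_mem _ _ _ hi)]
  congr 1
  ext i j
  have h2 : (i : Fin N) ∉ s := Finset.mem_compl.mp i.2
  simp [hB, Finset.piecewise, h2]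
lemma prod_pairs {N : ℕ} (s : Finset (Fin N)) (f : Fin N → Fin N → ℝ) :
    ∏ i ∈ s, ∏ j ∈ s.filter (fun j => i < j), f i j
      = ∏ a : Fin s.card, ∏ b ∈ Ioi a,
          f (s.orderIsoOfFin rfl a) (s.orderIsoOfFin rfl b) := by
  classical
  set e := s.orderIsoOfFin rfl with he
  rw [← Finset.prod_coe_sort s (fun i => ∏ j ∈ s.filter (fun j => i < j), f i j),
    ← Equiv.prod_comp e.toEquiv]
  refine Finset.prod_congr rfl fun a _ => ?_
  refine (Finset.prod_bij (fun (b : Fin s.card) (_ : b ∈ Ioi a) => ((e b : ↥s) : Fin N))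
    ?_ ?_ ?_ ?_).symm
  · intro b hb
    refine Finset.mem_filter.mpr ⟨(e b).2, ?_⟩
    exact Subtype.coe_lt_coe.mpr (e.lt_iff_lt.mpr (Finset.mem_Ioi.mp hb))
  · intro b1 h1 b2 h2 hbb
    exact e.injective (Subtype.coe_injective hbb)
  · intro j hj
    obtain ⟨hjs, haj⟩ := Finset.mem_filter.mp hj
    refine ⟨e.symm ⟨j, hjs⟩, Finset.mem_Ioi.mpr ?_, by simp⟩
    rw [← e.symm_apply_apply a, e.symm.lt_iff_lt]
    exact Subtype.coe_lt_coe.mp (by simpa using haj)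
  · intro b hb
    rfl

theorem det_omega_subtype {N : ℕ} (χ : Fin N → ℝ) (hpos : ∀ i, 0 < χ i) (s : Finset (Fin N)) :
    Matrix.det (Matrix.of fun i j : ↥s => 2 * Real.sqrt (χ i * χ j) / (χ i + χ j))
      = ∏ i ∈ s, ∏ j ∈ s.filter (fun j => i < j), ((χ i - χ j) / (χ i + χ j)) ^ 2 := by
  classical
  set e := s.orderIsoOfFin rfl with he
  rw [← Matrix.det_submatrix_equiv_self e.toEquiv]
  have : (Matrix.of fun i j : ↥s =>
        2 * Real.sqrt (χ i * χ j) / (χ i + χ j)).submatrix e.toEquiv e.toEquiv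
      = Matrix.of fun i j : Fin s.card =>
          2 * Real.sqrt ((χ (e i) : ℝ) * χ (e j)) / (χ (e i) + χ (e j)) := rfl
  rw [this, omega_det s.card (fun i => χ (e i)) (fun i => hpos _), prod_pairs s]


open Finset

/-- Partial-wave expansion of the KdV `N`-soliton tau function:
`det(Ψ² + ω) = ∑_{p ⊆ {1,…,N}} S_{pᶜ} ∏_{i∈p} Ψ_i²`, where
`S_r = ∏_{i<j ∈ r} S_{ij}²` with `S_{ij} = (χ_i − χ_j)/(χ_i + χ_j)`,
`ω_{ij} = 2√(χ_i χ_j)/(χ_i + χ_j)`, and `Ψ` diagonal with positive entries. -/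
theorem det_psi_sq_add_omega (N : ℕ) (hN : 0 < N) (χ : Fin N → ℝ)
    (hpos : ∀ i, 0 < χ i) (hmono : StrictMono χ)
    (ψ : Fin N → ℝ) (hψ : ∀ i, 0 < ψ i) :
    Matrix.det
        (Matrix.diagonal (fun i => ψ i ^ 2) +
          Matrix.of fun i j : Fin N => 2 * Real.sqrt (χ i * χ j) / (χ i + χ j)) =
      ∑ p : Finset (Fin N),
        (∏ i ∈ pᶜ, ∏ j ∈ pᶜ.filter (fun j => i < j),
            ((χ i - χ j) / (χ i + χ j)) ^ 2) *
          ∏ i ∈ p, ψ i ^ 2 := by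
  classical
  rw [det_diagonal_add (fun i => ψ i ^ 2)
    (Matrix.of fun i j : Fin N => 2 * Real.sqrt (χ i * χ j) / (χ i + χ j))]
  refine Finset.sum_congr rfl fun p _ => ?_
  rw [mul_comm]
  congr 1
  have h : (Matrix.of fun i j : ↥(pᶜ : Finset (Fin N)) =>
        (Matrix.of fun i j : Fin N => 2 * Real.sqrt (χ i * χ j) / (χ i + χ j)) i j)
      = Matrix.of fun i j : ↥(pᶜ : Finset (Fin N)) =>
          2 * Real.sqrt (χ i * χ j) / (χ i + χ j) := rfl
  rw [h, det_omega_subtype χ hpos pᶜ]
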